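/- Let G^{Init} be a rooted binary tree and 𝒢 a set of pairwise separated subtrees of G^{Init} covering all leaves. Let x be a node of G^{Init} such that the left child subtree of x contains exactly one tree of 𝒢 (namely G^{Init}[x_l] itself is in 𝒢) and the right child subtree contains at least two trees of 𝒢. Then in any triplet-respecting supertree G^{TR} for 𝒢, letting y be the node with L(y) = L(x) and y* the node with L(y*) = L(x_r) (both exist), the subtree G^{TR}[y] is obtained from G^{Init}[x_l] by grafting G^{TR}[y*] so that its root becomes the sibling of some node x* of G^{Init}[x_l]. -/

import Mathlib

inductive BTree (α : Type) where
  | leaf : α → BTree α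
  | node : BTree α → BTree α → BTree α
deriving DecidableEq

namespace BTree

variable {α : Type} [DecidableEq α] {σ : Type} [DecidableEq σ] {γ : Type} [DecidableEq γ]

/-- leaf (label) set of a tree -/
def leaves : BTree α → Finset α
  | leaf a => {a}
  | node l r => leaves l ∪ leaves r

/-- the leaf labels are pairwise distinct -/
def nodupLeaves : BTree α → Prop
  | leaf _ => True
  | node l r => nodupLeaves l ∧ nodupLeaves r ∧ Disjoint (leaves l) (leaves r)

/-- the (unordered) bipartition `(Ll, Lr)` is compatible with the tree:
the whole leaf set lies in one part, or the leaf sets of the two root child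
subtrees lie in opposite parts. -/
def compatible : BTree α → Finset α → Finset α → Prop
  | leaf a, Ll, Lr => a ∈ Ll ∨ a ∈ Lr
  | node l r, Ll, Lr =>
      leaves l ∪ leaves r ⊆ Ll ∨ leaves l ∪ leaves r ⊆ Lr ∨
      (leaves l ⊆ Ll ∧ leaves r ⊆ Lr) ∨ (leaves l ⊆ Lr ∧ leaves r ⊆ Ll)

/-- union of the leaf sets of a list of trees -/
def unionLeaves (Gs : List (BTree α)) : Finset α :=
  Gs.foldr (fun g acc => leaves g ∪ acc) ∅

/-- `(Ll, Lr)` is a bipartition of the union of the leaf sets (both parts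
nonempty) compatible with every tree in the list. -/
def isCompBip (Gs : List (BTree α)) (Ll Lr : Finset α) : Prop :=
  Ll ∪ Lr = unionLeaves Gs ∧ Disjoint Ll Lr ∧ Ll.Nonempty ∧ Lr.Nonempty ∧
    ∀ G ∈ Gs, compatible G Ll Lr

/-- restriction `G|_L` : remove the leaves not in `L` and suppress the
resulting degree-2 nodes; `none` if no leaf of `G` lies in `L`. -/
def restrict : BTree α → Finset α → Option (BTree α)
  | leaf a, L => if a ∈ L then some (leaf a) else none
  | node l r, L =>
      match restrict l L, restrict r L with
      | some l', some r' => some (node l' r')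
      | some l', none => some l'
      | none, some r' => some r'
      | none, none => none

/-- isomorphism of rooted leaf-labeled trees (children are unordered) -/
inductive Iso : BTree α → BTree α → Prop
  | leaf (a : α) : Iso (leaf a) (leaf a)
  | node {l r l' r' : BTree α} : Iso l l' → Iso r r' → Iso (node l r) (node l' r')
  | swap {l r l' r' : BTree α} : Iso l r' → Iso r l' → Iso (node l r) (node l' r')

/-- `G` displays `G'` : the restriction of `G` to the leaves of `G'` is
isomorphic to `G'` (preserving leaf labels). -/
def displays (G G' : BTree α) : Prop :=
  ∃ t, restrict G (leaves G') = some t ∧ Iso t G'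

/-- `Subtree t T` : `t` is a complete rooted subtree of `T` (i.e. `t = T[x]`
for some node `x` of `T`).  Equivalently, the root of `T` is a (weak)
ancestor of the root of `t`. -/
inductive Subtree : BTree α → BTree α → Prop
  | refl (t : BTree α) : Subtree t t
  | left {t l r : BTree α} : Subtree t l → Subtree t (node l r)
  | right {t l r : BTree α} : Subtree t r → Subtree t (node l r)

/-- two nodes (complete subtrees) are separated: neither is a (weak)
ancestor of the other -/
def separated (u v : BTree α) : Prop := ¬ Subtree u v ∧ ¬ Subtree v u

/-- the subtree rooted at the lowest common ancestor of the leaf set `L` -/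
def lcaSub : BTree α → Finset α → BTree α
  | leaf a, _ => leaf a
  | node l r, L =>
      if L ⊆ leaves l then lcaSub l L
      else if L ⊆ leaves r then lcaSub r L
      else node l r

/-- `T1` and `T2` induce the same rooted triplet topology on `{a, b, c}` -/
def sameTriplet (T1 T2 : BTree α) (a b c : α) : Prop :=
  ∃ t1 t2, restrict T1 {a, b, c} = some t1 ∧ restrict T2 {a, b, c} = some t2 ∧ Iso t1 t2

/-- `GTR` is triplet respecting w.r.t. `GInit` and the family `Gs` : for any
three leaves taken from three distinct trees of `Gs`, `GInit` and `GTR`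
induce the same rooted triplet topology. -/
def tripletRespecting (GInit GTR : BTree α) (Gs : List (BTree α)) : Prop :=
  ∀ G1 ∈ Gs, ∀ G2 ∈ Gs, ∀ G3 ∈ Gs, G1 ≠ G2 → G1 ≠ G3 → G2 ≠ G3 →
    ∀ a ∈ leaves G1, ∀ b ∈ leaves G2, ∀ c ∈ leaves G3, sameTriplet GInit GTR a b c

/-- at least two (distinct) trees of `Gs` are subtrees of `t` : `|𝒢(t)| ≥ 2` -/
def atLeastTwo (Gs : List (BTree α)) (t : BTree α) : Prop :=
  ∃ Gi ∈ Gs, ∃ Gj ∈ Gs, Gi ≠ Gj ∧ Subtree Gi t ∧ Subtree Gj t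

/-- `Graft T' T R` : `R` is obtained from `T` by grafting `T'` at some node
`x*` of `T`, i.e. subdividing the edge above `x*` (or adding a new root if
`x*` is the root) and attaching `T'` as the new sibling of `x*`. -/
inductive Graft (T' : BTree α) : BTree α → BTree α → Prop
  | atRootL (T : BTree α) : Graft T' T (node T' T)
  | atRootR (T : BTree α) : Graft T' T (node T T')
  | left {l r g : BTree α} : Graft T' l g → Graft T' (node l r) (node g r)
  | right {l r g : BTree α} : Graft T' r g → Graft T' (node l r) (node l g)

/-- number of edges from the root of `u` down to the node `v`, if `v` is a
node (complete subtree) of `u` -/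
def edist : BTree σ → BTree σ → Option ℕ
  | leaf a, v => if leaf a = v then some 0 else none
  | node l r, v =>
      if node l r = v then some 0 else
      match edist l v, edist r v with
      | some n, _ => some (n + 1)
      | none, some n => some (n + 1)
      | none, none => none

/-- number of nodes strictly between an ancestor `u` and a descendant `v` -/
def inter (u v : BTree σ) : ℕ := (edist u v).getD 1 - 1

/-- node (`lca`) of the species tree `S` associated to a set `L` of genes -/
def specOf (S : BTree σ) (s : γ → σ) (L : Finset γ) : BTree σ := lcaSub S (L.image s)

/-- the species-tree node `s(x)` associated with a gene-tree node `x`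
(lca of the species of the leaves below `x`) -/
def spec (S : BTree σ) (s : γ → σ) (t : BTree γ) : BTree σ := specOf S s (leaves t)

/-- the local LCA-reconciliation cost of a node whose own mapping is `su`
and whose children map to `sl` and `sr` -/
def localCost (su sl sr : BTree σ) : ℕ :=
  inter su sl + inter su sr +
    (if su = sl ∧ su = sr then 1 else if su = sl ∨ su = sr then 2 else 0)

/-- number of duplication nodes of the LCA-reconciliation -/
def dupCount (S : BTree σ) (s : γ → σ) : BTree γ → ℕ
  | leaf _ => 0
  | node l r =>
      dupCount S s l + dupCount S s r +
      (if spec S s (node l r) = spec S s l ∨ spec S s (node l r) = spec S s r then 1 else 0)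

/-- minimum number of losses of the LCA-reconciliation: for each edge `(x,c)`,
`inter(s(x), s(c))` losses, plus one more loss for each child `c` of a
duplication node `x` with `s(c) ≠ s(x)` -/
def lossCount (S : BTree σ) (s : γ → σ) : BTree γ → ℕ
  | leaf _ => 0
  | node l r =>
      lossCount S s l + lossCount S s r +
      (if spec S s (node l r) = spec S s l ∨ spec S s (node l r) = spec S s r then
        (inter (spec S s (node l r)) (spec S s l) +
          if spec S s l = spec S s (node l r) then 0 else 1) +
        (inter (spec S s (node l r)) (spec S s r) +
          if spec S s r = spec S s (node l r) then 0 else 1)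
      else
        inter (spec S s (node l r)) (spec S s l) + inter (spec S s (node l r)) (spec S s r))

/-- sum over all internal nodes of the local LCA-reconciliation costs -/
def totalLocal (S : BTree σ) (s : γ → σ) : BTree γ → ℕ
  | leaf _ => 0
  | node l r =>
      totalLocal S s l + totalLocal S s r +
      localCost (spec S s (node l r)) (spec S s l) (spec S s r)

/-- `G` is a supertree for `Gs` : a tree on the union of the leaf sets
(each leaf once) displaying every tree of `Gs` -/
def isSupertree (Gs : List (BTree γ)) (G : BTree γ) : Prop :=
  leaves G = unionLeaves Gs ∧ nodupLeaves G ∧ ∀ Gi ∈ Gs, displays G Gi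

/-- `MinSGT` : minimum LCA-reconciliation cost over all supertrees -/
noncomputable def reconMin (S : BTree σ) (s : γ → σ) (Gs : List (BTree γ)) : ℕ :=
  sInf {c | ∃ G : BTree γ, isSupertree Gs G ∧ totalLocal S s G = c}

/-- restrictions `G_i|_L` of the trees of the list (dropping empty ones) -/
def restrictList (Gs : List (BTree γ)) (L : Finset γ) : List (BTree γ) :=
  Gs.filterMap fun G => restrict G L

/-- the four possible ordered choices for distributing a tree into the two
parts of a bipartition: whole tree left, whole tree right, left subtree
left & right subtree right, left subtree right & right subtree left -/
def pick : BTree α → ℕ → Finset α × Finset α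
  | G, 0 => (leaves G, ∅)
  | G, 1 => (∅, leaves G)
  | node l r, 2 => (leaves l, leaves r)
  | node l r, _ => (leaves r, leaves l)
  | G, _ => (∅, leaves G)

/-- left part produced by a distribution `f` of choices -/
def partsLeft (Gs : List (BTree α)) (f : Fin Gs.length → Fin 4) : Finset α :=
  Finset.univ.biUnion fun i => (pick (Gs.get i) (f i).val).1

/-- right part produced by a distribution `f` of choices -/
def partsRight (Gs : List (BTree α)) (f : Fin Gs.length → Fin 4) : Finset α :=
  Finset.univ.biUnion fun i => (pick (Gs.get i) (f i).val).2

/-- the complete subtree at a position (path from the root) -/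
def subtreeAt : BTree α → List Bool → Option (BTree α)
  | t, [] => some t
  | leaf _, _ :: _ => none
  | node l _, false :: p => subtreeAt l p
  | node _ r, true :: p => subtreeAt r p

/-- the set of positions of internal nodes -/
def internalPos : BTree α → Finset (List Bool)
  | leaf _ => ∅
  | node l r =>
      insert [] ((internalPos l).image (List.cons false) ∪
        (internalPos r).image (List.cons true))

end BTree

/-- labeled gene trees: each internal node carries `true` (Dup) or `false` (Spec) -/
inductive LTree (α : Type) where
  | leaf : α → LTree α
  | node : Bool → LTree α → LTree α → LTree α
deriving DecidableEq

namespace LTree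

variable {α : Type} [DecidableEq α]

def leaves : LTree α → Finset α
  | leaf a => {a}
  | node _ l r => leaves l ∪ leaves r

/-- underlying unlabeled tree -/
def shape : LTree α → BTree α
  | leaf a => BTree.leaf a
  | node _ l r => BTree.node (shape l) (shape r)

/-- the event label of the root (`none` for a leaf) -/
def rootEv : LTree α → Option Bool
  | leaf _ => none
  | node e _ _ => some e

inductive Subtree : LTree α → LTree α → Prop
  | refl (t : LTree α) : Subtree t t
  | left {t l r : LTree α} {e : Bool} : Subtree t l → Subtree t (node e l r)
  | right {t l r : LTree α} {e : Bool} : Subtree t r → Subtree t (node e l r)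

/-- the subtree rooted at the lowest common ancestor of the leaf set `L` -/
def lcaSub : LTree α → Finset α → LTree α
  | leaf a, _ => leaf a
  | node e l r, L =>
      if L ⊆ leaves l then lcaSub l L
      else if L ⊆ leaves r then lcaSub r L
      else node e l r

/-- `G` displays `G'` (topologically, ignoring labels) -/
def displaysL (G G' : LTree α) : Prop := BTree.displays (shape G) (shape G')

/-- `(G, ev_G)` is label-compatible with `(G', ev_{G'})` : every internal
node `x'` of `G'` has the same event label as `lca_G(L(x'))` -/
def labelCompatible (G G' : LTree α) : Prop :=
  ∀ (e : Bool) (l r : LTree α), Subtree (node e l r) G' →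
    rootEv (lcaSub G (leaves (node e l r))) = some e

end LTree
set_option linter.unusedSectionVars false
namespace BTree
variable {α : Type} [DecidableEq α]

theorem iso_refl : ∀ t : BTree α, Iso t t
  | .leaf a => .leaf a
  | .node l r => .node (iso_refl l) (iso_refl r)

theorem Iso.symm : ∀ {s t : BTree α}, Iso s t → Iso t s
  | _, _, .leaf a => .leaf a
  | _, _, .node h1 h2 => .node h1.symm h2.symm
  | _, _, .swap h1 h2 => .swap h2.symm h1.symm

theorem Iso.leaves_eq : ∀ {s t : BTree α}, Iso s t → s.leaves = t.leaves
  | _, _, .leaf _ => by simp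
  | _, _, .node h1 h2 => by simp [leaves, h1.leaves_eq, h2.leaves_eq]
  | _, _, .swap h1 h2 => by simp [leaves, h1.leaves_eq, h2.leaves_eq, Finset.union_comm]

theorem leaves_nonempty : ∀ t : BTree α, t.leaves.Nonempty
  | .leaf a => ⟨a, by simp [leaves]⟩
  | .node l r => by
      rcases leaves_nonempty l with ⟨e, he⟩
      exact ⟨e, by simp [leaves]; exact Or.inl he⟩

theorem Subtree.leaves_subset {u T : BTree α} (h : Subtree u T) : u.leaves ⊆ T.leaves := by
  induction h with
  | refl => exact Finset.Subset.refl _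
  | left _ ih => exact le_trans ih (by simp [leaves])
  | right _ ih => exact le_trans ih (by simp [leaves])

theorem Subtree.nodup {u T : BTree α} (h : Subtree u T) (hnd : T.nodupLeaves) :
    u.nodupLeaves := by
  revert hnd
  induction h with
  | refl => exact fun hnd => hnd
  | left _ ih => exact fun hnd => ih hnd.1
  | right _ ih => exact fun hnd => ih hnd.2.1

theorem Subtree.trans {u v w : BTree α} (h1 : Subtree u v) (h2 : Subtree v w) : Subtree u w := by
  revert h1
  induction h2 with
  | refl => exact fun h1 => h1
  | left _ ih => exact fun h1 => .left (ih h1)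
  | right _ ih => exact fun h1 => .right (ih h1)

theorem subtree_node_inv {u l r : BTree α} (h : Subtree u (node l r)) :
    u = node l r ∨ Subtree u l ∨ Subtree u r := by
  cases h with
  | refl => exact Or.inl rfl
  | left h => exact Or.inr (Or.inl h)
  | right h => exact Or.inr (Or.inr h)

theorem subtree_comparable : ∀ {T u v : BTree α}, T.nodupLeaves → Subtree u T → Subtree v T →
    Subtree u v ∨ Subtree v u ∨ Disjoint u.leaves v.leaves := by
  intro T
  induction T with
  | leaf a =>
    intro u v _ hu hv
    cases hu; cases hv; exact Or.inl (.refl _)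
  | node l r ihl ihr =>
    intro u v hnd hu hv
    rcases subtree_node_inv hu with rfl | hu' | hu'
    · exact Or.inr (Or.inl hv)
    · rcases subtree_node_inv hv with rfl | hv' | hv'
      · exact Or.inl hu
      · rcases ihl hnd.1 hu' hv' with h | h | h
        · exact Or.inl h
        · exact Or.inr (Or.inl h)
        · exact Or.inr (Or.inr h)
      · exact Or.inr (Or.inr ((hnd.2.2.mono_left hu'.leaves_subset).mono_right hv'.leaves_subset))
    · rcases subtree_node_inv hv with rfl | hv' | hv'
      · exact Or.inl hu
      · exact Or.inr (Or.inr ((hnd.2.2.symm.mono_left hu'.leaves_subset).mono_right hv'.leaves_subset))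
      · rcases ihr hnd.2.1 hu' hv' with h | h | h
        · exact Or.inl h
        · exact Or.inr (Or.inl h)
        · exact Or.inr (Or.inr h)

theorem restrict_cases : ∀ (t : BTree α) (L : Finset α),
    (restrict t L = none ∧ Disjoint t.leaves L) ∨
    ∃ t', restrict t L = some t' ∧ t'.leaves = t.leaves ∩ L := by
  intro t
  induction t with
  | leaf a =>
    intro L
    by_cases h : a ∈ L
    · exact Or.inr ⟨.leaf a, by simp [restrict, h], by simp [leaves, h]⟩
    · exact Or.inl ⟨by simp [restrict, h], by simp [leaves, h]⟩
  | node l r ihl ihr =>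
    intro L
    rcases ihl L with ⟨hl, hdl⟩ | ⟨l', hl, hll⟩ <;> rcases ihr L with ⟨hr, hdr⟩ | ⟨r', hr, hrr⟩
    · exact Or.inl ⟨by simp [restrict, hl, hr], by simp [leaves, Finset.disjoint_union_left, hdl, hdr]⟩
    · exact Or.inr ⟨r', by simp [restrict, hl, hr], by
        simp [leaves, hrr, Finset.union_inter_distrib_right, Finset.disjoint_iff_inter_eq_empty.mp hdl]⟩
    · exact Or.inr ⟨l', by simp [restrict, hl, hr], by
        simp [leaves, hll, Finset.union_inter_distrib_right, Finset.disjoint_iff_inter_eq_empty.mp hdr]⟩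
    · exact Or.inr ⟨.node l' r', by simp [restrict, hl, hr], by
        simp [leaves, hll, hrr, Finset.union_inter_distrib_right]⟩

theorem restrict_none_of_disjoint {t : BTree α} {L : Finset α} (h : Disjoint t.leaves L) :
    restrict t L = none := by
  rcases restrict_cases t L with ⟨h1, _⟩ | ⟨t', h1, h2⟩
  · exact h1
  · exfalso
    have := leaves_nonempty t'
    rw [h2] at this
    rcases this with ⟨e, he⟩
    simp only [Finset.mem_inter] at he
    exact h.forall_ne_finset he.1 he.2 rfl

theorem restrict_all : ∀ {t : BTree α} {L : Finset α}, t.leaves ⊆ L → restrict t L = some t := by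
  intro t
  induction t with
  | leaf a => intro L h; simp only [leaves, Finset.singleton_subset_iff] at h; simp [restrict, h]
  | node l r ihl ihr =>
    intro L h
    simp only [leaves, Finset.union_subset_iff] at h
    simp [restrict, ihl h.1, ihr h.2]

theorem restrict_subtree {T u : BTree α} {L : Finset α} (hnd : T.nodupLeaves)
    (hs : Subtree u T) (hL : L ⊆ u.leaves) : restrict T L = restrict u L := by
  revert hnd
  induction hs with
  | refl => exact fun _ => rfl
  | @left l r h ih =>
    intro hnd
    have hLl : L ⊆ l.leaves := le_trans hL h.leaves_subset
    have hr : restrict r L = none :=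
      restrict_none_of_disjoint (hnd.2.2.symm.mono_right hLl)
    have hrec := ih hnd.1
    simp only [restrict, hr, ← hrec]
    rcases restrict_cases l L with ⟨h1, _⟩ | ⟨t', h1, _⟩ <;> simp [h1]
  | @right l r h ih =>
    intro hnd
    have hLr : L ⊆ r.leaves := le_trans hL h.leaves_subset
    have hl : restrict l L = none :=
      restrict_none_of_disjoint (hnd.2.2.mono_right hLr)
    have hrec := ih hnd.2.1
    simp only [restrict, hl, ← hrec]
    rcases restrict_cases r L with ⟨h1, _⟩ | ⟨t', h1, _⟩ <;> simp [h1]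

end BTree
namespace BTree
variable {α : Type} [DecidableEq α]

theorem lcaSub_subtree : ∀ (T : BTree α) (L : Finset α), Subtree (lcaSub T L) T := by
  intro T
  induction T with
  | leaf a => intro L; exact .refl _
  | node l r ihl ihr =>
    intro L
    unfold lcaSub
    by_cases h1 : L ⊆ l.leaves
    · simpa [h1] using .left (ihl L)
    · by_cases h2 : L ⊆ r.leaves
      · simpa [h1, h2] using .right (ihr L)
      · simpa [h1, h2] using Subtree.refl _

theorem lcaSub_supset : ∀ (T : BTree α) (L : Finset α), L ⊆ T.leaves → L ⊆ (lcaSub T L).leaves := by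
  intro T
  induction T with
  | leaf a => intro L h; exact h
  | node l r ihl ihr =>
    intro L h
    unfold lcaSub
    by_cases h1 : L ⊆ l.leaves
    · simpa [h1] using ihl L h1
    · by_cases h2 : L ⊆ r.leaves
      · simpa [h1, h2] using ihr L h2
      · simpa [h1, h2] using h

theorem lcaSub_subset : ∀ (T : BTree α) (L : Finset α), L.Nonempty → L ⊆ T.leaves →
    (∀ l r, Subtree (node l r) T → (L ∩ l.leaves).Nonempty → (L ∩ r.leaves).Nonempty →
      l.leaves ∪ r.leaves ⊆ L) →
    (lcaSub T L).leaves ⊆ L := by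
  intro T
  induction T with
  | leaf a =>
    intro L hne hsub _
    rcases hne with ⟨e, he⟩
    have : e = a := by simpa [leaves] using hsub he
    subst this
    simpa [lcaSub, leaves] using he
  | node l r ihl ihr =>
    intro L hne hsub hconv
    unfold lcaSub
    by_cases h1 : L ⊆ l.leaves
    · simpa [h1] using ihl L hne h1 (fun a b hab => hconv a b (.left hab))
    · by_cases h2 : L ⊆ r.leaves
      · simpa [h1, h2] using ihr L hne h2 (fun a b hab => hconv a b (.right hab))
      · simp only [h1, h2, if_false]
        rcases Finset.not_subset.mp h1 with ⟨b, hbL, hbl⟩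
        rcases Finset.not_subset.mp h2 with ⟨a, haL, har⟩
        have hb : b ∈ r.leaves := by
          have := hsub hbL; simp [leaves] at this; tauto
        have ha : a ∈ l.leaves := by
          have := hsub haL; simp [leaves] at this; tauto
        exact hconv l r (.refl _) ⟨a, Finset.mem_inter.mpr ⟨haL, ha⟩⟩
          ⟨b, Finset.mem_inter.mpr ⟨hbL, hb⟩⟩

theorem mem_unionLeaves {Gs : List (BTree α)} {a : α} :
    a ∈ unionLeaves Gs ↔ ∃ G ∈ Gs, a ∈ G.leaves := by
  induction Gs with
  | nil => simp [unionLeaves]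
  | cons g gs ih => simp [unionLeaves, List.foldr] at ih ⊢; rw [ih]

/-- `t` has root split separating `z` from the pair `{u,v}` -/
def splitAway (t : BTree α) (z u v : α) : Prop :=
  ∃ p q, t = node p q ∧ ((p.leaves = {z} ∧ q.leaves = {u, v}) ∨ (p.leaves = {u, v} ∧ q.leaves = {z}))

theorem splitAway_comm {t : BTree α} {z u v : α} (h : splitAway t z u v) : splitAway t z v u := by
  rcases h with ⟨p, q, rfl, h⟩
  exact ⟨p, q, rfl, by rwa [Finset.pair_comm v u]⟩

theorem iso_node_parts {p q p' q' : BTree α} (h : Iso (node p q) (node p' q')) :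
    (p.leaves = p'.leaves ∧ q.leaves = q'.leaves) ∨
    (p.leaves = q'.leaves ∧ q.leaves = p'.leaves) := by
  cases h with
  | node h1 h2 => exact Or.inl ⟨h1.leaves_eq, h2.leaves_eq⟩
  | swap h1 h2 => exact Or.inr ⟨h1.leaves_eq, h2.leaves_eq⟩

theorem splitAway_not_iso {t1 t2 : BTree α} {z u v : α} (hzu : z ≠ u) (hzv : z ≠ v)
    (huv : u ≠ v) (h1 : splitAway t1 z u v) (h2 : splitAway t2 u z v) (hiso : Iso t1 t2) :
    False := by
  rcases h1 with ⟨p, q, rfl, h1⟩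
  rcases h2 with ⟨p', q', rfl, h2⟩
  have key : ∀ X Y : Finset α, (X = {z} ∨ X = {u, v}) → (Y = {u} ∨ Y = {z, v}) → X ≠ Y := by
    rintro X Y (rfl | rfl) (rfl | rfl) h
    · exact hzu (by simpa using h)
    · refine hzv ?_
      have hv : v ∈ ({z, v} : Finset α) := by simp
      rw [← h] at hv
      exact (by simpa using hv : v = z).symm
    · refine huv ?_
      have hv : v ∈ ({u, v} : Finset α) := by simp
      rw [h] at hv
      exact (by simpa using hv : v = u).symm
    · have hu : u ∈ ({u, v} : Finset α) := by simp
      rw [h] at hu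
      rcases (by simpa using hu : u = z ∨ u = v) with h' | h'
      · exact hzu h'.symm
      · exact huv h'
  have hp : p.leaves = {z} ∨ p.leaves = {u, v} := h1.imp And.left And.left
  have hp' : p'.leaves = {u} ∨ p'.leaves = {z, v} := h2.imp And.left And.left
  have hq' : q'.leaves = {u} ∨ q'.leaves = {z, v} := (h2.imp And.right And.right).symm
  rcases iso_node_parts hiso with ⟨g1, _⟩ | ⟨g1, _⟩
  · exact key _ _ hp hp' g1
  · exact key _ _ hp hq' g1

end BTree
namespace BTree
variable {α : Type} [DecidableEq α]

/-- key triplet lemma: if `b, c` lie in a subtree `w` of `T` and `a` is a leaf of `T`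
outside `w`, then the triplet of `T` on `{a,b,c}` separates `a` from `{b,c}`. -/
theorem triplet_of_subtree {T w : BTree α} {a b c : α} (hnd : T.nodupLeaves)
    (hw : Subtree w T) (hb : b ∈ w.leaves) (hc : c ∈ w.leaves)
    (ha : a ∈ T.leaves) (haw : a ∉ w.leaves) :
    ∃ t, restrict T {a, b, c} = some t ∧ splitAway t a b c := by
  induction hw with
  | refl => exact absurd ha haw
  | @left l r h ih =>
    have hbl : b ∈ l.leaves := h.leaves_subset hb
    have hcl : c ∈ l.leaves := h.leaves_subset hc
    simp only [leaves, Finset.mem_union] at ha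
    have hdlr : Disjoint l.leaves r.leaves := hnd.2.2
    rcases ha with hal | har
    · rcases ih hnd.1 hal with ⟨t, ht, hsp⟩
      have hr : restrict r {a, b, c} = none := by
        apply restrict_none_of_disjoint
        rw [Finset.disjoint_right]
        intro e he
        simp only [Finset.mem_insert, Finset.mem_singleton] at he
        rcases he with rfl | rfl | rfl
        · exact Finset.disjoint_left.mp hdlr hal
        · exact Finset.disjoint_left.mp hdlr hbl
        · exact Finset.disjoint_left.mp hdlr hcl
      exact ⟨t, by simp [restrict, ht, hr], hsp⟩
    · have hal : a ∉ l.leaves := fun hx => Finset.disjoint_left.mp hdlr hx har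
      have hbr : b ∉ r.leaves := fun hx => Finset.disjoint_left.mp hdlr hbl hx
      have hcr : c ∉ r.leaves := fun hx => Finset.disjoint_left.mp hdlr hcl hx
      rcases restrict_cases l {a, b, c} with ⟨_, hd⟩ | ⟨tl, hl, hll⟩
      · exact absurd (Finset.disjoint_left.mp hd hbl) (by simp)
      rcases restrict_cases r {a, b, c} with ⟨_, hd⟩ | ⟨tr, hr, hrr⟩
      · exact absurd (Finset.disjoint_left.mp hd har) (by simp)
      refine ⟨node tl tr, by simp [restrict, hl, hr], tl, tr, rfl, Or.inr ⟨?_, ?_⟩⟩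
      · rw [hll]; ext e
        simp only [Finset.mem_inter, Finset.mem_insert, Finset.mem_singleton]
        constructor
        · rintro ⟨hel, rfl | rfl | rfl⟩
          · exact absurd hel hal
          · exact Or.inl rfl
          · exact Or.inr rfl
        · rintro (rfl | rfl)
          · exact ⟨hbl, Or.inr (Or.inl rfl)⟩
          · exact ⟨hcl, Or.inr (Or.inr rfl)⟩
      · rw [hrr]; ext e
        simp only [Finset.mem_inter, Finset.mem_insert, Finset.mem_singleton]
        constructor
        · rintro ⟨her, rfl | rfl | rfl⟩
          · rfl
          · exact absurd her hbr
          · exact absurd her hcr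
        · rintro rfl; exact ⟨har, Or.inl rfl⟩
  | @right l r h ih =>
    have hbr : b ∈ r.leaves := h.leaves_subset hb
    have hcr : c ∈ r.leaves := h.leaves_subset hc
    simp only [leaves, Finset.mem_union] at ha
    have hdlr : Disjoint l.leaves r.leaves := hnd.2.2
    rcases ha with hal | har
    · have har : a ∉ r.leaves := fun hx => Finset.disjoint_left.mp hdlr hal hx
      have hbl : b ∉ l.leaves := fun hx => Finset.disjoint_left.mp hdlr hx hbr
      have hcl : c ∉ l.leaves := fun hx => Finset.disjoint_left.mp hdlr hx hcr
      rcases restrict_cases l {a, b, c} with ⟨_, hd⟩ | ⟨tl, hl, hll⟩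
      · exact absurd (Finset.disjoint_left.mp hd hal) (by simp)
      rcases restrict_cases r {a, b, c} with ⟨_, hd⟩ | ⟨tr, hr, hrr⟩
      · exact absurd (Finset.disjoint_left.mp hd hbr) (by simp)
      refine ⟨node tl tr, by simp [restrict, hl, hr], tl, tr, rfl, Or.inl ⟨?_, ?_⟩⟩
      · rw [hll]; ext e
        simp only [Finset.mem_inter, Finset.mem_insert, Finset.mem_singleton]
        constructor
        · rintro ⟨hel, rfl | rfl | rfl⟩
          · rfl
          · exact absurd hel hbl
          · exact absurd hel hcl
        · rintro rfl; exact ⟨hal, Or.inl rfl⟩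
      · rw [hrr]; ext e
        simp only [Finset.mem_inter, Finset.mem_insert, Finset.mem_singleton]
        constructor
        · rintro ⟨her, rfl | rfl | rfl⟩
          · exact absurd her har
          · exact Or.inl rfl
          · exact Or.inr rfl
        · rintro (rfl | rfl)
          · exact ⟨hbr, Or.inr (Or.inl rfl)⟩
          · exact ⟨hcr, Or.inr (Or.inr rfl)⟩
    · rcases ih hnd.2.1 har with ⟨t, ht, hsp⟩
      have hl : restrict l {a, b, c} = none := by
        apply restrict_none_of_disjoint
        rw [Finset.disjoint_right]
        intro e he
        simp only [Finset.mem_insert, Finset.mem_singleton] at he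
        rcases he with rfl | rfl | rfl
        · exact fun hx => Finset.disjoint_left.mp hdlr hx har
        · exact fun hx => Finset.disjoint_left.mp hdlr hx hbr
        · exact fun hx => Finset.disjoint_left.mp hdlr hx hcr
      exact ⟨t, by simp [restrict, hl, ht], hsp⟩

theorem graft_of_restrict : ∀ {y v : BTree α} {A : Finset α}, y.nodupLeaves →
    Subtree v y → v ≠ y → Disjoint A v.leaves → y.leaves ⊆ A ∪ v.leaves →
    ∃ t, restrict y A = some t ∧ Graft v t y := by
  intro y
  induction y with
  | leaf a =>
    intro v A _ hv hne _ _
    cases hv; exact absurd rfl hne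
  | node l r ihl ihr =>
    intro v A hnd hv hne hdisj hcov
    have hdlr : Disjoint l.leaves r.leaves := hnd.2.2
    simp only [leaves, Finset.union_subset_iff] at hcov
    rcases subtree_node_inv hv with heq | hvl | hvr
    · exact absurd heq hne
    · -- v inside l
      have hrA : r.leaves ⊆ A := by
        intro e he
        rcases Finset.mem_union.mp (hcov.2 he) with h | h
        · exact h
        · exact absurd (hvl.leaves_subset h) (fun hL => Finset.disjoint_left.mp hdlr hL he)
      have hr : restrict r A = some r := restrict_all hrA
      by_cases hveq : v = l
      · subst hveq
        have hl : restrict v A = none := restrict_none_of_disjoint hdisj.symm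
        exact ⟨r, by simp [restrict, hl, hr], .atRootL r⟩
      · rcases ihl hnd.1 hvl hveq hdisj (by
          intro e he
          rcases Finset.mem_union.mp (hcov.1 he) with h | h
          · exact Finset.mem_union_left _ h
          · exact Finset.mem_union_right _ h) with ⟨tl, hl, hg⟩
        exact ⟨node tl r, by simp [restrict, hl, hr], .left hg⟩
    · -- v inside r
      have hlA : l.leaves ⊆ A := by
        intro e he
        rcases Finset.mem_union.mp (hcov.1 he) with h | h
        · exact h
        · exact absurd (hvr.leaves_subset h) (fun hL => Finset.disjoint_left.mp hdlr he hL)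
      have hl : restrict l A = some l := restrict_all hlA
      by_cases hveq : v = r
      · subst hveq
        have hr : restrict v A = none := restrict_none_of_disjoint hdisj.symm
        exact ⟨l, by simp [restrict, hl, hr], .atRootR l⟩
      · rcases ihr hnd.2.1 hvr hveq hdisj (by
          intro e he
          rcases Finset.mem_union.mp (hcov.2 he) with h | h
          · exact Finset.mem_union_left _ h
          · exact Finset.mem_union_right _ h) with ⟨tr, hr, hg⟩
        exact ⟨node l tr, by simp [restrict, hl, hr], .right hg⟩

theorem graft_iso {v : BTree α} : ∀ {t y x : BTree α}, Graft v t y → Iso t x →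
    ∃ g, Graft v x g ∧ Iso g y := by
  intro t y x hg
  induction hg generalizing x with
  | atRootL T =>
    intro hiso
    exact ⟨node v x, .atRootL x, .node (iso_refl v) hiso.symm⟩
  | atRootR T =>
    intro hiso
    exact ⟨node x v, .atRootR x, .node hiso.symm (iso_refl v)⟩
  | @left l r g hg ih =>
    intro hiso
    cases hiso with
    | node h1 h2 =>
      rcases ih h1 with ⟨g', hg', hiso'⟩
      exact ⟨node g' _, .left hg', .node hiso' h2.symm⟩
    | swap h1 h2 =>
      rcases ih h1 with ⟨g', hg', hiso'⟩
      exact ⟨node _ g', .right hg', .swap h2.symm hiso'⟩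
  | @right l r g hg ih =>
    intro hiso
    cases hiso with
    | node h1 h2 =>
      rcases ih h2 with ⟨g', hg', hiso'⟩
      exact ⟨node _ g', .right hg', .node h1.symm hiso'⟩
    | swap h1 h2 =>
      rcases ih h2 with ⟨g', hg', hiso'⟩
      exact ⟨node g' _, .left hg', .swap hiso' h1.symm⟩

end BTree
namespace BTree
variable {α : Type} [DecidableEq α]

/-- core contradiction: `p, q` in `w` (in `G^{Init}`) lying in the two child
subtrees `l, r` of a node of `G^{TR}`, with `c ∉ L(w)` also below that node -/
theorem triplet_core {GInit GTR w l r : BTree α} {p q c : α}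
    (hndI : GInit.nodupLeaves) (hndT : GTR.nodupLeaves)
    (hw : Subtree w GInit) (hlr : Subtree (node l r) GTR)
    (hleq : GTR.leaves = GInit.leaves)
    (hpw : p ∈ w.leaves) (hpl : p ∈ l.leaves)
    (hqw : q ∈ w.leaves) (hqr : q ∈ r.leaves)
    (hcw : c ∉ w.leaves) (hclr : c ∈ l.leaves ∪ r.leaves)
    (hst : sameTriplet GInit GTR p q c) : False := by
  have hndlr := hlr.nodup hndT
  have hd : Disjoint l.leaves r.leaves := hndlr.2.2
  have hcT : c ∈ GTR.leaves := hlr.leaves_subset (by simpa [leaves] using hclr)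
  have hcI : c ∈ GInit.leaves := hleq ▸ hcT
  have hpc : p ≠ c := fun h => hcw (h ▸ hpw)
  have hqc : q ≠ c := fun h => hcw (h ▸ hqw)
  have hpq : p ≠ q := fun h => Finset.disjoint_left.mp hd hpl (h ▸ hqr)
  obtain ⟨t1, ht1, hsp1⟩ := triplet_of_subtree hndI hw hpw hqw hcI hcw
  obtain ⟨u1, u2, hu1, hu2, hiso⟩ := hst
  have hset1 : ({p, q, c} : Finset α) = {c, p, q} := by ext e; simp; tauto
  rw [hset1, ht1] at hu1
  injection hu1 with hu1; subst hu1
  rcases Finset.mem_union.mp hclr with hcl | hcr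
  · have hlT : Subtree l GTR := Subtree.trans (.left (.refl l)) hlr
    have hql : q ∉ l.leaves := fun hx => Finset.disjoint_left.mp hd hx hqr
    have hqT : q ∈ GTR.leaves := hlr.leaves_subset (by simp [leaves]; exact Or.inr hqr)
    obtain ⟨t2, ht2, hsp2⟩ := triplet_of_subtree hndT hlT hpl hcl hqT hql
    have hset2 : ({p, q, c} : Finset α) = {q, p, c} := by ext e; simp; tauto
    rw [hset2, ht2] at hu2
    injection hu2 with hu2; subst hu2
    exact splitAway_not_iso hqc.symm hpc.symm hpq.symm
      (splitAway_comm hsp1) (splitAway_comm hsp2) hiso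
  · have hrT : Subtree r GTR := Subtree.trans (.right (.refl r)) hlr
    have hpr : p ∉ r.leaves := fun hx => Finset.disjoint_left.mp hd hpl hx
    have hpT : p ∈ GTR.leaves := hlr.leaves_subset (by simp [leaves]; exact Or.inl hpl)
    obtain ⟨t2, ht2, hsp2⟩ := triplet_of_subtree hndT hrT hqr hcr hpT hpr
    rw [ht2] at hu2
    injection hu2 with hu2; subst hu2
    exact splitAway_not_iso hpc.symm hqc.symm hpq
      hsp1 (splitAway_comm hsp2) hiso

/-- core contradiction, second form: `b, d ∈ L(w)`, `c ∉ L(w)`; in `G^{TR}`,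
`b` and `c` are below a node while `d` is not. -/
theorem triplet_core2 {GInit GTR w l r : BTree α} {b d c : α}
    (hndI : GInit.nodupLeaves) (hndT : GTR.nodupLeaves)
    (hw : Subtree w GInit) (hlr : Subtree (node l r) GTR)
    (hleq : GTR.leaves = GInit.leaves)
    (hbw : b ∈ w.leaves) (hblr : b ∈ l.leaves ∪ r.leaves)
    (hdw : d ∈ w.leaves) (hdlr : d ∉ l.leaves ∪ r.leaves) (hdT : d ∈ GTR.leaves)
    (hcw : c ∉ w.leaves) (hclr : c ∈ l.leaves ∪ r.leaves)
    (hst : sameTriplet GInit GTR b d c) : False := by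
  have hcT : c ∈ GTR.leaves := hlr.leaves_subset (by simpa [leaves] using hclr)
  have hcI : c ∈ GInit.leaves := hleq ▸ hcT
  have hbc : b ≠ c := fun h => hcw (h ▸ hbw)
  have hdc : d ≠ c := fun h => hcw (h ▸ hdw)
  have hbd : b ≠ d := fun h => hdlr (h ▸ hblr)
  obtain ⟨t1, ht1, hsp1⟩ := triplet_of_subtree hndI hw hbw hdw hcI hcw
  obtain ⟨t2, ht2, hsp2⟩ := triplet_of_subtree (w := node l r) hndT hlr
    (by simpa [leaves] using hblr) (by simpa [leaves] using hclr) hdT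
    (by simpa [leaves] using hdlr)
  obtain ⟨u1, u2, hu1, hu2, hiso⟩ := hst
  have hset1 : ({b, d, c} : Finset α) = {c, b, d} := by ext e; simp; tauto
  have hset2 : ({b, d, c} : Finset α) = {d, b, c} := by ext e; simp; tauto
  rw [hset1, ht1] at hu1
  rw [hset2, ht2] at hu2
  injection hu1 with hu1; subst hu1
  injection hu2 with hu2; subst hu2
  exact splitAway_not_iso hdc.symm hbc.symm hbd.symm
    (splitAway_comm hsp1) (splitAway_comm hsp2) hiso

end BTree
namespace BTree
variable {α : Type} [DecidableEq α]

/-- convexity: the leaf set of a node `w` of `G^{Init}` containing two distinct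
trees of `𝒢` is "convex" in `G^{TR}`. -/
theorem clade_convex {GInit GTR : BTree α} {Gs : List (BTree α)}
    (hndI : GInit.nodupLeaves) (hndT : GTR.nodupLeaves)
    (hsub : ∀ Gi ∈ Gs, Subtree Gi GInit)
    (hdisj : Gs.Pairwise fun a b => Disjoint a.leaves b.leaves)
    (hcover : unionLeaves Gs = GInit.leaves)
    (hleaves : GTR.leaves = GInit.leaves)
    (htrip : tripletRespecting GInit GTR Gs)
    {w Gi Gj : BTree α} (hwI : Subtree w GInit)
    (hGi : Gi ∈ Gs) (hGj : Gj ∈ Gs) (hij : Gi ≠ Gj)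
    (hGiw : Subtree Gi w) (hGjw : Subtree Gj w) :
    ∀ l r, Subtree (node l r) GTR → (w.leaves ∩ l.leaves).Nonempty →
      (w.leaves ∩ r.leaves).Nonempty → l.leaves ∪ r.leaves ⊆ w.leaves := by
  have hdisjS : ∀ G ∈ Gs, ∀ H ∈ Gs, G ≠ H → Disjoint G.leaves H.leaves :=
    by haveI : Std.Symm (fun a b : BTree α => Disjoint a.leaves b.leaves) := ⟨fun _ _ h => h.symm⟩; exact hdisj.forall
  have treeIn : ∀ G ∈ Gs, ∀ e ∈ G.leaves, e ∈ w.leaves → G.leaves ⊆ w.leaves := by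
    intro G hG e heG hew
    rcases subtree_comparable hndI (hsub G hG) hwI with h | h | h
    · exact h.leaves_subset
    · exfalso
      by_cases hGiG : Gi = G
      · have hne : Gj ≠ G := fun hh => hij (hGiG.trans hh.symm)
        have hsubJ : Gj.leaves ⊆ G.leaves := (hGjw.trans h).leaves_subset
        rcases leaves_nonempty Gj with ⟨f, hf⟩
        exact Finset.disjoint_left.mp (hdisjS Gj hGj G hG hne) hf (hsubJ hf)
      · have hsubI : Gi.leaves ⊆ G.leaves := (hGiw.trans h).leaves_subset
        rcases leaves_nonempty Gi with ⟨f, hf⟩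
        exact Finset.disjoint_left.mp (hdisjS Gi hGi G hG hGiG) hf (hsubI hf)
    · exact absurd hew (Finset.disjoint_left.mp h heG)
  intro l r hlr hal hbr
  rcases hal with ⟨a, ha⟩
  rcases hbr with ⟨b, hb⟩
  rw [Finset.mem_inter] at ha hb
  intro c hc
  by_contra hcw
  have haI : a ∈ GInit.leaves := hwI.leaves_subset ha.1
  have hbI : b ∈ GInit.leaves := hwI.leaves_subset hb.1
  have hcT : c ∈ GTR.leaves := hlr.leaves_subset (by simpa [leaves] using hc)
  have hcI : c ∈ GInit.leaves := hleaves ▸ hcT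
  obtain ⟨Ga, hGa, haGa⟩ := mem_unionLeaves.mp (hcover ▸ haI)
  obtain ⟨Gb, hGb, hbGb⟩ := mem_unionLeaves.mp (hcover ▸ hbI)
  obtain ⟨Gc, hGc, hcGc⟩ := mem_unionLeaves.mp (hcover ▸ hcI)
  have hnotc : ∀ e, e ∈ Gc.leaves → e ∉ w.leaves := fun e he hew =>
    hcw (treeIn Gc hGc e he hew hcGc)
  have hGaGc : Ga ≠ Gc := fun h => hnotc a (h ▸ haGa) ha.1
  have hGbGc : Gb ≠ Gc := fun h => hnotc b (h ▸ hbGb) hb.1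
  by_cases hab : Ga = Gb
  · -- a, b in the same tree: use a leaf of another tree inside w
    obtain ⟨H, hH, hHGa, hHw⟩ : ∃ H ∈ Gs, H ≠ Ga ∧ Subtree H w := by
      by_cases hGiG : Gi = Ga
      · exact ⟨Gj, hGj, fun hh => hij (hGiG ▸ hh.symm ▸ rfl), hGjw⟩
      · exact ⟨Gi, hGi, hGiG, hGiw⟩
    rcases leaves_nonempty H with ⟨d, hd⟩
    have hdw : d ∈ w.leaves := hHw.leaves_subset hd
    have hHGc : H ≠ Gc := fun h => hnotc d (h ▸ hd) hdw
    by_cases hdl : d ∈ l.leaves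
    · exact triplet_core hndI hndT hwI hlr hleaves hdw hdl hb.1 hb.2 hcw hc
        (htrip H hH Gb hGb Gc hGc (hab ▸ hHGa) hHGc hGbGc d hd b hbGb c hcGc)
    · by_cases hdr : d ∈ r.leaves
      · exact triplet_core hndI hndT hwI hlr hleaves ha.1 ha.2 hdw hdr hcw hc
          (htrip Ga hGa H hH Gc hGc (fun h => hHGa h.symm) hGaGc hHGc a haGa d hd c hcGc)
      · have hdlr : d ∉ l.leaves ∪ r.leaves := by
          rw [Finset.mem_union]; tauto
        have hdT : d ∈ GTR.leaves := hleaves ▸ hwI.leaves_subset hdw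
        exact triplet_core2 hndI hndT hwI hlr hleaves hb.1
          (Finset.mem_union_right _ hb.2) hdw hdlr hdT hcw hc
          (htrip Gb hGb H hH Gc hGc (fun h => (hab ▸ hHGa : H ≠ Gb) h.symm) hGbGc hHGc
            b hbGb d hd c hcGc)
  · exact triplet_core hndI hndT hwI hlr hleaves ha.1 ha.2 hb.1 hb.2 hcw hc
      (htrip Ga hGa Gb hGb Gc hGc hab hGaGc hGbGc a haGa b hbGb c hcGc)

/-- a node of `G^{TR}` with leaf set exactly `L(w)` -/
theorem clade_exists {GInit GTR : BTree α} {Gs : List (BTree α)}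
    (hndI : GInit.nodupLeaves) (hndT : GTR.nodupLeaves)
    (hsub : ∀ Gi ∈ Gs, Subtree Gi GInit)
    (hdisj : Gs.Pairwise fun a b => Disjoint a.leaves b.leaves)
    (hcover : unionLeaves Gs = GInit.leaves)
    (hleaves : GTR.leaves = GInit.leaves)
    (htrip : tripletRespecting GInit GTR Gs)
    {w Gi Gj : BTree α} (hwI : Subtree w GInit)
    (hGi : Gi ∈ Gs) (hGj : Gj ∈ Gs) (hij : Gi ≠ Gj)
    (hGiw : Subtree Gi w) (hGjw : Subtree Gj w) :
    Subtree (lcaSub GTR w.leaves) GTR ∧ (lcaSub GTR w.leaves).leaves = w.leaves := by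
  have hwT : w.leaves ⊆ GTR.leaves := hleaves ▸ hwI.leaves_subset
  refine ⟨lcaSub_subtree _ _, Finset.Subset.antisymm ?_ (lcaSub_supset _ _ hwT)⟩
  exact lcaSub_subset GTR w.leaves (leaves_nonempty w) hwT (by
    intro l r hlr h1 h2
    exact clade_convex hndI hndT hsub hdisj hcover hleaves htrip hwI hGi hGj hij hGiw hGjw
      l r hlr h1 h2)

end BTree

/-- if the left child subtree of `x` is itself a tree of `𝒢`
and the right child subtree contains at least two trees of `𝒢`, then in any
triplet-respecting supertree the subtree `G^{TR}[y]` (with `L(y) = L(x)`) is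
obtained by grafting `G^{TR}[y*]` (with `L(y*) = L(x_r)`) onto
`G^{Init}[x_l]` at some node `x*`. -/
theorem stmt8 {α : Type} [DecidableEq α] (GInit GTR : BTree α) (Gs : List (BTree α))
    (hndI : GInit.nodupLeaves) (hndT : GTR.nodupLeaves)
    (hsub : ∀ Gi ∈ Gs, BTree.Subtree Gi GInit)
    (hdisj : Gs.Pairwise fun a b => Disjoint a.leaves b.leaves)
    (hcover : BTree.unionLeaves Gs = GInit.leaves)
    (hleaves : GTR.leaves = GInit.leaves)
    (hdisp : ∀ Gi ∈ Gs, GTR.displays Gi)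
    (htrip : BTree.tripletRespecting GInit GTR Gs)
    (xl xr : BTree α) (hx : BTree.Subtree (BTree.node xl xr) GInit)
    (hxl : xl ∈ Gs)
    (h2r : BTree.atLeastTwo Gs xr) :
    ∃ y ystar g, BTree.Subtree y GTR ∧ y.leaves = (BTree.node xl xr).leaves ∧
      BTree.Subtree ystar GTR ∧ ystar.leaves = xr.leaves ∧
      BTree.Graft ystar xl g ∧ BTree.Iso g y := by
  classical
  obtain ⟨Gi, hGi, Gj, hGj, hij, hGixr, hGjxr⟩ := h2r
  have hndx : (BTree.node xl xr).nodupLeaves := hx.nodup hndI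
  have hdd : Disjoint xl.leaves xr.leaves := hndx.2.2
  have hxrI : BTree.Subtree xr GInit := BTree.Subtree.trans (.right (.refl xr)) hx
  have hxlne : xl ≠ Gi := by
    rintro rfl
    rcases BTree.leaves_nonempty xl with ⟨e, he⟩
    exact Finset.disjoint_left.mp hdd he (hGixr.leaves_subset he)
  -- y : node of GTR with leaf set L(x)
  obtain ⟨hyT, hyL⟩ := BTree.clade_exists hndI hndT hsub hdisj hcover hleaves htrip
    hx hxl hGi hxlne (.left (.refl xl)) (.right hGixr)
  -- y* : node of GTR with leaf set L(xr)
  obtain ⟨hysT, hysL⟩ := BTree.clade_exists hndI hndT hsub hdisj hcover hleaves htrip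
    hxrI hGi hGj hij hGixr hGjxr
  set y := BTree.lcaSub GTR (BTree.node xl xr).leaves with hy
  set ystar := BTree.lcaSub GTR xr.leaves with hys
  have hxlsub : xl.leaves ⊆ y.leaves := by
    rw [hyL]; simp [BTree.leaves]
  have hxrsub : xr.leaves ⊆ y.leaves := by
    rw [hyL]; simp [BTree.leaves]
  have hne : ystar ≠ y := by
    intro h
    rcases BTree.leaves_nonempty xl with ⟨e, he⟩
    have : e ∈ xr.leaves := by
      have := hxlsub he
      rw [← h, hysL] at this
      exact this
    exact Finset.disjoint_left.mp hdd he this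
  have hsy : BTree.Subtree ystar y := by
    rcases BTree.subtree_comparable hndT hysT hyT with h | h | h
    · exact h
    · exfalso
      rcases BTree.leaves_nonempty xl with ⟨e, he⟩
      have : e ∈ xr.leaves := by
        have := h.leaves_subset (hxlsub he)
        rwa [hysL] at this
      exact Finset.disjoint_left.mp hdd he this
    · exfalso
      rcases BTree.leaves_nonempty xr with ⟨e, he⟩
      exact Finset.disjoint_left.mp h (hysL ▸ he : e ∈ ystar.leaves) (hxrsub he)
  have hndy : y.nodupLeaves := hyT.nodup hndT
  obtain ⟨t, hrt, hgraft⟩ := BTree.graft_of_restrict hndy hsy hne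
    (by rw [hysL]; exact hdd)
    (by rw [hyL, hysL]; simp [BTree.leaves])
  have hrEq : BTree.restrict GTR xl.leaves = BTree.restrict y xl.leaves :=
    BTree.restrict_subtree hndT hyT hxlsub
  obtain ⟨t', hrt', hiso'⟩ := hdisp xl hxl
  rw [hrEq, hrt] at hrt'
  injection hrt' with hrt'
  subst hrt'
  obtain ⟨g, hg, hgiso⟩ := BTree.graft_iso hgraft hiso'
  exact ⟨y, ystar, g, hyT, hyL, hysT, hysL, hg, hgiso⟩
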